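/- Let F be a 3×3 real matrix with det F > 0 and let λ, μ be real constants. Then the neo-Hookean free energy Ψ(F) = ½λ(ln det F)² + ½μ(F:F − 3 − 2 ln det F) is Fréchet differentiable at F, and its derivative applied to any 3×3 real matrix H equals P(F):H, where P(F) = λ ln(det F) F⁻ᵀ + μ(F − F⁻ᵀ) is the Piola–Kirchhoff stress. That is, the Piola–Kirchhoff stress is the gradient of the free energy with respect to the deformation gradient: P = ∂Ψ/∂F. -/

import Mathlib

open Matrix

attribute [local instance] Matrix.normedAddCommGroup Matrix.normedSpace

noncomputable def detCMM : ContinuousMultilinearMap ℝ (fun _ : Fin 3 => Fin 3 → ℝ) ℝ :=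
  (Matrix.detRowAlternating (n := Fin 3) (R := ℝ)).toMultilinearMap.mkContinuous
    (Fintype.card (Equiv.Perm (Fin 3))) (by
      intro m
      have hm : (Matrix.detRowAlternating (n := Fin 3) (R := ℝ)).toMultilinearMap m
          = Matrix.det (Matrix.of m) := rfl
      rw [hm, Matrix.det_apply]
      calc ‖∑ σ : Equiv.Perm (Fin 3), Equiv.Perm.sign σ • ∏ i, Matrix.of m (σ i) i‖
          ≤ ∑ σ : Equiv.Perm (Fin 3), ‖Equiv.Perm.sign σ • ∏ i, Matrix.of m (σ i) i‖ :=
            norm_sum_le _ _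
        _ ≤ ∑ _σ : Equiv.Perm (Fin 3), ∏ i, ‖m i‖ := by
            refine Finset.sum_le_sum fun σ _ => ?_
            have h1 : ‖Equiv.Perm.sign σ • ∏ i, Matrix.of m (σ i) i‖
                = ‖∏ i, Matrix.of m (σ i) i‖ := by
              rcases Int.units_eq_one_or (Equiv.Perm.sign σ) with h | h <;>
                simp [h, Units.smul_def]
            rw [h1]
            calc ‖∏ i, Matrix.of m (σ i) i‖ ≤ ∏ i, ‖m (σ i)‖ := by
                  rw [norm_prod]
                  exact Finset.prod_le_prod (fun _ _ => norm_nonneg _)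
                    (fun i _ => norm_le_pi_norm (m (σ i)) i)
              _ = ∏ i, ‖m i‖ := Equiv.prod_comp σ (fun i => ‖m i‖)
        _ = Fintype.card (Equiv.Perm (Fin 3)) * ∏ i, ‖m i‖ := by
            simp [Finset.card_univ])

theorem detCMM_hasFDerivAt (F : Matrix (Fin 3) (Fin 3) ℝ) :
    HasFDerivAt (fun G : Matrix (Fin 3) (Fin 3) ℝ => G.det) (detCMM.linearDeriv F) F :=
  detCMM.hasFDerivAt (x := F)

theorem detCMM_linearDeriv_apply (F H : Matrix (Fin 3) (Fin 3) ℝ) :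
    detCMM.linearDeriv F H = (F.adjugate * H).trace := by
  erw [ContinuousMultilinearMap.linearDeriv_apply]
  have h1 : ∀ i, detCMM (Function.update F i (H i)) = (F.updateRow i (H i)).det := fun i => rfl
  simp_rw [h1]
  have h2 : ∀ i : Fin 3, (F.updateRow i (H i)).det = Matrix.cramer Fᵀ (H i) i := fun i =>
    (Matrix.cramer_transpose_apply F (H i) i).symm
  simp_rw [h2, Matrix.cramer_eq_adjugate_mulVec, ← Matrix.adjugate_transpose,
    Matrix.trace, Matrix.diag, Matrix.mul_apply, Matrix.mulVec, dotProduct,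
    Matrix.transpose_apply]
  rw [Finset.sum_comm]

noncomputable def entryCLM (i j : Fin 3) : Matrix (Fin 3) (Fin 3) ℝ →L[ℝ] ℝ :=
  LinearMap.toContinuousLinearMap
    { toFun := fun G => G i j, map_add' := fun _ _ => rfl, map_smul' := fun _ _ => rfl }

@[simp] theorem entryCLM_apply (i j : Fin 3) (G : Matrix (Fin 3) (Fin 3) ℝ) :
    entryCLM i j G = G i j := rfl

/-- The neo-Hookean free energy `Ψ(F) = ½λ(ln det F)² + ½μ(F:F − 3 − 2 ln det F)`
is Fréchet differentiable at any `F` with `det F > 0`, and its derivative applied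
to `H` is `P(F):H`, where `P(F) = λ ln(det F) F⁻ᵀ + μ(F − F⁻ᵀ)` and
`A:B = trace(Aᵀ·B)` is the Frobenius inner product. -/
theorem piola_kirchhoff_is_gradient_of_free_energy
    (F : Matrix (Fin 3) (Fin 3) ℝ) (hF : 0 < F.det) (lam mu : ℝ) :
    ∃ D : Matrix (Fin 3) (Fin 3) ℝ →L[ℝ] ℝ,
      HasFDerivAt
        (fun G : Matrix (Fin 3) (Fin 3) ℝ =>
          (1 / 2 : ℝ) * lam * (Real.log G.det) ^ 2 +
            (1 / 2 : ℝ) * mu * ((Gᵀ * G).trace - 3 - 2 * Real.log G.det))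
        D F ∧
      ∀ H : Matrix (Fin 3) (Fin 3) ℝ,
        D H = (((lam * Real.log F.det) • (F⁻¹)ᵀ + mu • (F - (F⁻¹)ᵀ))ᵀ * H).trace := by
  set Ddet : Matrix (Fin 3) (Fin 3) ℝ →L[ℝ] ℝ := detCMM.linearDeriv F with hDdet
  have hdet : HasFDerivAt (fun G : Matrix (Fin 3) (Fin 3) ℝ => G.det) Ddet F :=
    detCMM_hasFDerivAt F
  have hlog : HasFDerivAt (fun G : Matrix (Fin 3) (Fin 3) ℝ => Real.log G.det)
      ((F.det)⁻¹ • Ddet) F :=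
    (Real.hasDerivAt_log (ne_of_gt hF)).comp_hasFDerivAt F hdet
  have hsq : HasFDerivAt (fun G : Matrix (Fin 3) (Fin 3) ℝ => (Real.log G.det) ^ 2)
      ((Real.log F.det) • ((F.det)⁻¹ • Ddet) + (Real.log F.det) • ((F.det)⁻¹ • Ddet)) F := by
    have := hlog.mul hlog
    simp only [pow_two]
    exact this
  -- trace part
  set Dtr : Matrix (Fin 3) (Fin 3) ℝ →L[ℝ] ℝ :=
    ∑ i : Fin 3, ∑ j : Fin 3, (F j i • entryCLM j i + F j i • entryCLM j i) with hDtr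
  have htr : HasFDerivAt (fun G : Matrix (Fin 3) (Fin 3) ℝ => (Gᵀ * G).trace) Dtr F := by
    have key : (fun G : Matrix (Fin 3) (Fin 3) ℝ => (Gᵀ * G).trace)
        = fun G => ∑ i : Fin 3, ∑ j : Fin 3, G j i * G j i := by
      funext G
      simp [Matrix.trace, Matrix.diag, Matrix.mul_apply, Matrix.transpose_apply]
    rw [key, hDtr]
    exact HasFDerivAt.fun_sum fun i _ => HasFDerivAt.fun_sum fun j _ => by
      have h := ((entryCLM j i).hasFDerivAt (x := F)).mul ((entryCLM j i).hasFDerivAt (x := F))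
      simp only [Pi.mul_def, entryCLM_apply] at h
      exact h
  have hmain := ((hsq.const_mul ((1 / 2 : ℝ) * lam)).add
    (((htr.sub_const 3).sub (hlog.const_mul 2)).const_mul ((1 / 2 : ℝ) * mu)))
  refine ⟨_, hmain, fun H => ?_⟩
  have hDdetH : Ddet H = (F.adjugate * H).trace := detCMM_linearDeriv_apply F H
  have hFinv : (F⁻¹ * H).trace = (F.det)⁻¹ * (F.adjugate * H).trace := by
    rw [Matrix.inv_def, Ring.inverse_eq_inv', Matrix.smul_mul, Matrix.trace_smul, smul_eq_mul]
  have hRHS : (((lam * Real.log F.det) • (F⁻¹)ᵀ + mu • (F - (F⁻¹)ᵀ))ᵀ * H).trace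
      = (lam * Real.log F.det) * ((F.det)⁻¹ * (F.adjugate * H).trace)
        + mu * ((Fᵀ * H).trace - (F⁻¹ * H).trace) + mu * 0 := by
    simp only [Matrix.transpose_add, Matrix.transpose_smul, Matrix.transpose_sub,
      Matrix.transpose_transpose, Matrix.add_mul, Matrix.smul_mul, Matrix.sub_mul,
      Matrix.trace_add, Matrix.trace_smul, Matrix.trace_sub, smul_eq_mul, hFinv]
    ring
  rw [hRHS, hFinv]
  have hDtrH : Dtr H = ∑ i : Fin 3, ∑ j : Fin 3, (F j i * H j i + F j i * H j i) := by
    simp [hDtr, ContinuousLinearMap.sum_apply]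
  have hFtH : (Fᵀ * H).trace = ∑ i : Fin 3, ∑ j : Fin 3, F j i * H j i := by
    simp [Matrix.trace, Matrix.diag, Matrix.mul_apply, Matrix.transpose_apply]
  show (1 / 2 * lam) * (Real.log F.det * (F.det⁻¹ * Ddet H) + Real.log F.det * (F.det⁻¹ * Ddet H)) +
    (1 / 2 * mu) * (Dtr H - 2 * (F.det⁻¹ * Ddet H)) = _
  simp only [ContinuousLinearMap.add_apply, ContinuousLinearMap.smul_apply,
    ContinuousLinearMap.sub_apply, smul_eq_mul, hDdetH, hDtrH, hFtH]
  simp only [Finset.sum_add_distrib]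
  ring
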